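/- Let V be a (2n+1)-dimensional real vector space with alternating bilinear form ω and linear functional η such that ker η ∩ ker ω = {0}. Then the dual space V* decomposes as the direct sum of the image of the map v ↦ ι_v ω and the one-dimensional span of η. -/

import Mathlib

open Module

lemma alt_odd_degenerate (n : ℕ) (V : Type*) [AddCommGroup V] [Module ℝ V]
    [FiniteDimensional ℝ V] (hdim : Module.finrank ℝ V = 2 * n + 1)
    (ω : V →ₗ[ℝ] V →ₗ[ℝ] ℝ) (hω : ∀ v, ω v v = 0) :
    ∃ ξ : V, ξ ≠ 0 ∧ ∀ w, ω ξ w = 0 := by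
  have halt : LinearMap.IsAlt ω := hω
  have hskew : ∀ x y, ω x y = -ω y x := fun x y => (halt.neg y x).symm
  by_contra h
  push_neg at h
  have hnd : LinearMap.BilinForm.Nondegenerate ω := by
    refine LinearMap.BilinForm.Nondegenerate.ofSeparatingLeft ?_
    intro v hv
    by_contra hv0
    obtain ⟨w, hw⟩ := h v hv0
    exact hw (hv w)
  have b : Basis (Fin (2 * n + 1)) ℝ V := Module.finBasisOfFinrankEq ℝ V hdim
  have hdet := (LinearMap.BilinForm.nondegenerate_iff_det_ne_zero b).mp hnd
  apply hdet
  set A := LinearMap.BilinForm.toMatrix b ω with hA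
  have hT : A.transpose = -A := by
    ext i j
    simp only [Matrix.transpose_apply, Matrix.neg_apply, hA,
      BilinForm.toMatrix_apply]
    exact (halt.neg _ _).symm
  have : A.det = -A.det := by
    conv_lhs => rw [← Matrix.det_transpose, hT, Matrix.det_neg]
    simp [Fintype.card_fin, pow_succ]
  linarith

/-- If ker η ∩ ker ω = {0}, the dual space decomposes as the
direct sum of the range of v ↦ ι_v ω and the span of η. -/
theorem dual_decomposition_almost_cosymplectic
    (n : ℕ) (V : Type*) [AddCommGroup V] [Module ℝ V] [FiniteDimensional ℝ V]
    (hdim : Module.finrank ℝ V = 2 * n + 1)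
    (ω : V →ₗ[ℝ] V →ₗ[ℝ] ℝ) (hω : ∀ v, ω v v = 0)
    (η : V →ₗ[ℝ] ℝ)
    (hker : ∀ v : V, η v = 0 → (∀ w, ω v w = 0) → v = 0) :
    IsCompl (LinearMap.range ω) (Submodule.span ℝ {η}) := by
  have halt : LinearMap.IsAlt ω := hω
  have hskew : ∀ x y, ω x y = -ω y x := fun x y => (halt.neg y x).symm
  obtain ⟨ξ, hξ0, hξ⟩ := alt_odd_degenerate n V hdim ω hω
  have hηξ : η ξ ≠ 0 := fun h => hξ0 (hker ξ h hξ)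
  constructor
  · -- disjoint
    rw [disjoint_iff]
    ext φ
    simp only [Submodule.mem_inf, Submodule.mem_bot, LinearMap.mem_range,
      Submodule.mem_span_singleton]
    constructor
    · rintro ⟨⟨v, hv⟩, c, hc⟩
      have h1 : φ ξ = 0 := by
        rw [← hv, hskew v ξ, hξ v, neg_zero]
      rw [← hc] at h1
      simp only [LinearMap.smul_apply, smul_eq_mul] at h1
      have hc0 : c = 0 := by
        rcases mul_eq_zero.mp h1 with h | h
        · exact h
        · exact absurd h hηξ
      rw [← hc, hc0, zero_smul]
    · rintro rfl
      exact ⟨⟨0, by simp⟩, 0, by simp⟩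
  · -- codisjoint
    rw [codisjoint_iff]
    -- the map Φ v = ω v + η v • η is injective hence surjective
    set Φ : V →ₗ[ℝ] (V →ₗ[ℝ] ℝ) :=
      ω + (LinearMap.smulRight η η) with hΦ
    have hinj : Function.Injective Φ := by
      rw [← LinearMap.ker_eq_bot, LinearMap.ker_eq_bot']
      intro v hv
      have hv' : ∀ w, ω v w + η v * η w = 0 := by
        intro w
        have := congrArg (fun f => f w) hv
        simpa [hΦ, mul_comm] using this
      have hηv : η v = 0 := by
        have := hv' v
        rw [hω v, zero_add] at this
        nlinarith [this]
      have hωv : ∀ w, ω v w = 0 := by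
        intro w
        have := hv' w
        rw [hηv, zero_mul, add_zero] at this
        exact this
      exact hker v hηv hωv
    have hsurj : Function.Surjective Φ := by
      have : Module.finrank ℝ (V →ₗ[ℝ] ℝ) = Module.finrank ℝ V :=
        Subspace.dual_finrank_eq
      exact (LinearMap.injective_iff_surjective_of_finrank_eq_finrank this.symm).mp hinj
    rw [eq_top_iff]
    intro φ _
    obtain ⟨v, hv⟩ := hsurj φ
    have : φ = ω v + η v • η := by
      rw [← hv]; ext w; simp [hΦ, mul_comm]
    rw [this]
    exact Submodule.add_mem_sup (LinearMap.mem_range_self ω v)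
      (Submodule.smul_mem _ _ (Submodule.mem_span_singleton_self η))
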